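/- The set-valued map G : ℝ² → Set ℝ² defined by G(x₁,x₂) = {(2,2)} if x₂ ≠ 0 and G(x₁,x₂) = {(s,s) : 1 ≤ s ≤ 2} if x₂ = 0 is pseudomonotone on ℝ². -/

import Mathlib

open RealInnerProductSpace

noncomputable def G6 : EuclideanSpace ℝ (Fin 2) → Set (EuclideanSpace ℝ (Fin 2)) := fun x =>
  if x 1 ≠ 0 then {WithLp.toLp 2 (fun _ => (2 : ℝ))}
  else {y | ∃ s : ℝ, 1 ≤ s ∧ s ≤ 2 ∧ y = WithLp.toLp 2 (fun _ => s)}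

lemma G6_mem {x y : EuclideanSpace ℝ (Fin 2)} (h : y ∈ G6 x) :
    ∃ s : ℝ, 1 ≤ s ∧ y = WithLp.toLp 2 (fun _ => s) := by
  unfold G6 at h
  split_ifs at h with hx
  · exact ⟨2, by norm_num, h⟩
  · obtain ⟨s, hs1, _, hy⟩ := h
    exact ⟨s, hs1, hy⟩

lemma inner_const (s : ℝ) (x z : EuclideanSpace ℝ (Fin 2)) (hx : x = WithLp.toLp 2 (fun _ => s)) :
    ⟪x, z⟫ = s * (z 0 + z 1) := by
  subst hx
  simp [PiLp.inner_apply, Fin.sum_univ_two, RCLike.inner_apply]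
  ring

/-- The map `G` of Example 2.1 is pseudomonotone on `ℝ²`. -/
theorem stmt_6 :
    ∀ v w : EuclideanSpace ℝ (Fin 2),
      (∃ vs ∈ G6 v, ⟪vs, w - v⟫ ≥ 0) → ∀ ws ∈ G6 w, ⟪ws, w - v⟫ ≥ 0 := by
  intro v w ⟨vs, hvs, hpos⟩ ws hws
  obtain ⟨s, hs1, hvseq⟩ := G6_mem hvs
  obtain ⟨t, ht1, hwseq⟩ := G6_mem hws
  rw [inner_const s vs (w - v) hvseq] at hpos
  rw [inner_const t ws (w - v) hwseq]
  have hz : (0:ℝ) ≤ (w - v) 0 + (w - v) 1 :=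
    nonneg_of_mul_nonneg_right hpos (by linarith)
  positivity
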